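/- For every partition λ, every n, and every 1 ≤ i < n, the Young lowering operator f_i maps SSYT_n(λ) to SSYT_n(λ) ∪ {0}: if T ∈ SSYT_n(λ) and f_i(T) ≠ 0, then f_i(T) is again a semistandard Young tableau of shape λ with entries in {1,…,n}, and wt(f_i(T)) is obtained from wt(T) by decreasing the i-th part by 1 and increasing the (i+1)-st part by 1. -/

import Mathlib

/-! ## Reading words and the lowering operators on Mathlib's semistandard
Young tableaux.

Mathlib uses the English convention with rows indexed from the top starting at
`0`; the paper's row reading word (rows left to right, from the top row of the
French diagram to the bottom one) therefore reads the rows in order of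
decreasing Mathlib row index. -/

/-- The cells of the Young diagram `μ` in reading order: rows left to right,
from the bottom row (in English convention) to the top one. -/
def readingCells (μ : YoungDiagram) : List (ℕ × ℕ) :=
  ((List.range (μ.colLen 0)).reverse).flatMap (fun i =>
    (List.range (μ.rowLen i)).map (fun j => (i, j)))

/-- The row reading word of a semistandard Young tableau. -/
def rowWord {μ : YoungDiagram} (T : SemistandardYoungTableau μ) : List ℕ :=
  (readingCells μ).map (fun rc => T rc.1 rc.2)

/-- `mAt i w r` is `m_i(w, r)`: the number of `i`'s minus the number of
`(i+1)`'s among the first `r` letters of `w`. -/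
def mAt (i : ℕ) (w : List ℕ) (r : ℕ) : ℤ :=
  ((w.take r).count i : ℤ) - ((w.take r).count (i + 1) : ℤ)

/-- `mMax i w` is `m_i(w) = max_{1 ≤ r ≤ |w|} m_i(w, r)` (with value `0` for the
empty word). -/
def mMax (i : ℕ) (w : List ℕ) : ℤ :=
  WithBot.unbotD 0 (@List.maximum ℤ Int.instLinearOrder.toPartialOrder.toPreorder Int.decLt ((List.range w.length).map (fun r => mAt i w (r + 1))))

/-- The 0-based position in the reading word of a tableau used by the lowering
operator `f_i`: the smallest index at which `m_i` attains its maximum. -/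
def lowerIdx {μ : YoungDiagram} (i : ℕ) (T : SemistandardYoungTableau μ) : ℕ :=
  (List.range (rowWord T).length).findIdx
    (fun r => decide (mAt i (rowWord T) (r + 1) = mMax i (rowWord T)))

/-- The lowering operator `f_i` on (fillings of) semistandard Young tableaux:
`youngLowerFun i T = none` when `f_i(T) = 0` (i.e. `m_i(w(T)) ≤ 0`); otherwise
the entry at the cell corresponding to the leftmost position attaining
`m_i(w(T))` is changed to `i + 1`. -/
def youngLowerFun {μ : YoungDiagram} (i : ℕ) (T : SemistandardYoungTableau μ) :
    Option (ℕ → ℕ → ℕ) :=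
  if mMax i (rowWord T) ≤ 0 then none
  else
    match (readingCells μ)[lowerIdx i T]? with
    | none => none
    | some q => some (fun a b => if (a, b) = q then i + 1 else T a b)

/-- The weight of a filling of `μ`: the number of cells with entry `k`. -/
def wtM (μ : YoungDiagram) (f : ℕ → ℕ → ℕ) (k : ℕ) : ℕ :=
  (μ.cells.filter (fun rc => f rc.1 rc.2 = k)).card


/-! ### Auxiliary machinery -/

def ylRowBlock (μ : YoungDiagram) (a : ℕ) : List (ℕ × ℕ) :=
  (List.range (μ.rowLen a)).map (fun j => (a, j))

def ylRows (μ : YoungDiagram) (s n : ℕ) : List (ℕ × ℕ) :=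
  ((List.range' s n).reverse).flatMap (fun r => ylRowBlock μ r)

lemma readingCells_eq (μ : YoungDiagram) :
    readingCells μ = ylRows μ 0 (μ.colLen 0) := by
  rw [readingCells, ylRows, List.range_eq_range']; rfl

lemma ylRows_top (μ : YoungDiagram) (a : ℕ) :
    ylRows μ 0 (a + 1) = ylRowBlock μ a ++ ylRows μ 0 a := by
  have h1 : List.range' 0 (a + 1) = List.range' 0 a ++ [a] := by
    have := List.range'_append (s := 0) (m := a) (n := 1) (step := 1)
    simp at this
    have h2 : a + 1 = 1 + a := by omega
    rw [← this]
  rw [ylRows, h1, List.reverse_append, List.flatMap_append]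
  simp [ylRows]

lemma ylRows_split (μ : YoungDiagram) (a n : ℕ) (h : a < n) :
    ylRows μ 0 n = ylRows μ (a + 1) (n - (a + 1)) ++ ylRows μ 0 (a + 1) := by
  have h1 : List.range' 0 n = List.range' 0 (a + 1) ++ List.range' (a + 1) (n - (a + 1)) := by
    have := List.range'_append (s := 0) (m := a + 1) (n := n - (a + 1)) (step := 1)
    simp at this
    rw [this]
    congr 1
    omega
  rw [ylRows, h1, List.reverse_append, List.flatMap_append]
  rfl

lemma ylRows_snoc (μ : YoungDiagram) (s n : ℕ) (hn : 0 < n) :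
    ylRows μ s n = ylRows μ (s + 1) (n - 1) ++ ylRowBlock μ s := by
  obtain ⟨m, rfl⟩ : ∃ m, n = m + 1 := ⟨n - 1, by omega⟩
  rw [ylRows, List.range'_succ, List.reverse_cons, List.flatMap_append]
  simp [ylRows]

lemma fst_of_mem_ylRows {μ : YoungDiagram} {s n : ℕ} {x : ℕ × ℕ}
    (hx : x ∈ ylRows μ s n) : s ≤ x.1 ∧ x.1 < s + n ∧ x.2 < μ.rowLen x.1 := by
  simp only [ylRows, List.mem_flatMap, List.mem_reverse, List.mem_range'_1,
    ylRowBlock, List.mem_map, List.mem_range] at hx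
  obtain ⟨r, ⟨h1, h2⟩, j, hj, rfl⟩ := hx
  exact ⟨h1, h2, hj⟩

lemma length_ylRowBlock (μ : YoungDiagram) (a : ℕ) :
    (ylRowBlock μ a).length = μ.rowLen a := by simp [ylRowBlock]

lemma getElem_ylRowBlock (μ : YoungDiagram) (a j : ℕ) (hj : j < (ylRowBlock μ a).length) :
    (ylRowBlock μ a)[j] = (a, j) := by
  simp only [ylRowBlock, List.getElem_map, List.getElem_range]

lemma mAt_zero (i : ℕ) (w : List ℕ) : mAt i w 0 = 0 := by simp [mAt]

lemma le_mMax {i : ℕ} {w : List ℕ} {r : ℕ} (h0 : 0 ≤ mMax i w) :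
    mAt i w r ≤ mMax i w := by
  cases r with
  | zero => simpa [mAt] using h0
  | succ s =>
    by_cases hs : s < w.length
    · have hmem : mAt i w (s + 1) ∈
          (List.range w.length).map (fun r => mAt i w (r + 1)) :=
        List.mem_map.2 ⟨s, List.mem_range.2 hs, rfl⟩
      rcases hmax : ((List.range w.length).map (fun r => mAt i w (r + 1))).maximum with _ | m
      · replace hmax := List.maximum_eq_bot.1 hmax
        simp [hmax] at hmem
      · have := List.le_maximum_of_mem hmem hmax
        simp only [mMax, hmax]; exact this
    · push_neg at hs
      rcases Nat.eq_zero_or_pos w.length with h | h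
      · have : w = [] := List.length_eq_zero_iff.1 h
        subst this
        simpa [mAt] using h0
      · obtain ⟨m, hm⟩ : ∃ m, w.length = m + 1 := ⟨w.length - 1, by omega⟩
        have heq : mAt i w (s + 1) = mAt i w (m + 1) := by
          unfold mAt
          rw [List.take_of_length_le (by omega), List.take_of_length_le (by omega)]
        rw [heq]
        have hmem : mAt i w (m + 1) ∈
            (List.range w.length).map (fun r => mAt i w (r + 1)) :=
          List.mem_map.2 ⟨m, List.mem_range.2 (by omega), rfl⟩
        rcases hmax : ((List.range w.length).map (fun r => mAt i w (r + 1))).maximum with _ | mx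
        · replace hmax := List.maximum_eq_bot.1 hmax
          simp [hmax] at hmem
        · have := List.le_maximum_of_mem hmem hmax
          simp only [mMax, hmax]; exact this

lemma exists_mMax {i : ℕ} {w : List ℕ} (h0 : 0 < mMax i w) :
    ∃ r < w.length, mAt i w (r + 1) = mMax i w := by
  rcases hmax : ((List.range w.length).map (fun r => mAt i w (r + 1))).maximum with _ | m
  · exfalso
    have hmax' : ((List.range w.length).map (fun r => mAt i w (r + 1))).maximum
        = (⊥ : WithBot ℤ) := hmax
    rw [mMax, hmax'] at h0
    simp at h0
  · have hm : m ∈ (List.range w.length).map (fun r => mAt i w (r + 1)) :=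
      List.maximum_mem hmax
    obtain ⟨r, hr, hrm⟩ := List.mem_map.1 hm
    exact ⟨r, List.mem_range.1 hr, by rw [hrm, mMax, hmax]; rfl⟩

lemma mAt_succ_eq {i : ℕ} {w : List ℕ} {r : ℕ} (h : r < w.length) :
    mAt i w (r + 1) = mAt i w r + (if w[r] = i then (1 : ℤ) else 0)
      - (if w[r] = i + 1 then (1 : ℤ) else 0) := by
  have ht : w.take (r + 1) = w.take r ++ [w[r]] := by
    rw [List.take_succ, List.getElem?_eq_getElem h]; rfl
  unfold mAt
  rw [ht, List.count_append, List.count_append]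
  by_cases h1 : w[r] = i
  · have h2 : w[r] ≠ i + 1 := by omega
    rw [h1]
    simp only [List.count_singleton', if_pos rfl, beq_self_eq_true, if_true,
      beq_iff_eq, if_neg (by omega : ¬ (i = i + 1))]
    push_cast; ring
  · by_cases h2 : w[r] = i + 1
    · rw [h2]
      simp only [List.count_singleton', beq_iff_eq,
        if_neg (by omega : ¬ (i + 1 = i)), if_pos rfl, if_neg (by omega : ¬ (i = i + 1)),
        if_pos rfl]
      push_cast; ring
    · have e1 : ¬ (i = w[r]) := fun h => h1 h.symm
      have e2 : ¬ (i + 1 = w[r]) := fun h => h2 h.symm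
      simp only [List.count_singleton', beq_iff_eq, if_neg h1, if_neg h2, if_neg e1, if_neg e2]
      push_cast; ring

lemma lowerIdx_spec {μ : YoungDiagram} (i : ℕ) (T : SemistandardYoungTableau μ)
    (h0 : 0 < mMax i (rowWord T)) :
    lowerIdx i T < (rowWord T).length ∧
      mAt i (rowWord T) (lowerIdx i T + 1) = mMax i (rowWord T) ∧
      ∀ r < lowerIdx i T, mAt i (rowWord T) (r + 1) ≠ mMax i (rowWord T) := by
  classical
  obtain ⟨r0, hr0, hr0m⟩ := exists_mMax h0
  have hex : ∃ x ∈ List.range (rowWord T).length,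
      (fun r => decide (mAt i (rowWord T) (r + 1) = mMax i (rowWord T))) x = true :=
    ⟨r0, List.mem_range.2 hr0, by simp [hr0m]⟩
  have hlen : List.findIdx (fun r => decide (mAt i (rowWord T) (r + 1) = mMax i (rowWord T)))
      (List.range (rowWord T).length) < (List.range (rowWord T).length).length :=
    List.findIdx_lt_length_of_exists hex
  have hpl : lowerIdx i T = List.findIdx
      (fun r => decide (mAt i (rowWord T) (r + 1) = mMax i (rowWord T)))
      (List.range (rowWord T).length) := rfl
  have hlen' : lowerIdx i T < (rowWord T).length := by
    rw [hpl]; simpa using hlen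
  refine ⟨hlen', ?_, ?_⟩
  · have := List.findIdx_getElem (w := hlen)
    rw [List.getElem_range] at this
    rw [← hpl] at this
    exact of_decide_eq_true this
  · intro r hr
    have hr' : r < List.findIdx
        (fun r => decide (mAt i (rowWord T) (r + 1) = mMax i (rowWord T)))
        (List.range (rowWord T).length) := by rw [← hpl]; exact hr
    have := List.not_of_lt_findIdx hr'
    rw [List.getElem_range] at this
    exact of_decide_eq_false this

lemma wtM_decomp (μ : YoungDiagram) (f : ℕ → ℕ → ℕ) (k : ℕ) {q : ℕ × ℕ}
    (hq : q ∈ μ.cells) :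
    wtM μ f k = ((μ.cells.erase q).filter (fun rc => f rc.1 rc.2 = k)).card
      + (if f q.1 q.2 = k then 1 else 0) := by
  classical
  conv_lhs => rw [wtM, ← Finset.insert_erase hq]
  rw [Finset.filter_insert]
  split_ifs with h
  · rw [Finset.card_insert_of_notMem
      (fun hmem => (Finset.notMem_erase q _) (Finset.mem_filter.1 hmem).1)]
  · simp

lemma idx_decomp (μ : YoungDiagram) (p : ℕ) (hp : p < (readingCells μ).length)
    {a b : ℕ} (hq : (readingCells μ)[p] = (a, b)) :
    a < μ.colLen 0 ∧ b < μ.rowLen a ∧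
      readingCells μ = ylRows μ (a + 1) (μ.colLen 0 - (a + 1)) ++
        (ylRowBlock μ a ++ ylRows μ 0 a) ∧
      p = (ylRows μ (a + 1) (μ.colLen 0 - (a + 1))).length + b := by
  have hmem : (a, b) ∈ ylRows μ 0 (μ.colLen 0) := by
    rw [← readingCells_eq, ← hq]
    exact List.getElem_mem hp
  obtain ⟨-, haK, hb⟩ := fst_of_mem_ylRows hmem
  rw [Nat.zero_add] at haK
  have hsplit : readingCells μ = ylRows μ (a + 1) (μ.colLen 0 - (a + 1)) ++
      (ylRowBlock μ a ++ ylRows μ 0 a) := by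
    rw [readingCells_eq, ylRows_split μ a _ haK, ylRows_top]
  refine ⟨haK, hb, hsplit, ?_⟩
  have hp' : p < (ylRows μ (a + 1) (μ.colLen 0 - (a + 1)) ++
      (ylRowBlock μ a ++ ylRows μ 0 a)).length := by rw [← hsplit]; exact hp
  have hq' : (ylRows μ (a + 1) (μ.colLen 0 - (a + 1)) ++
      (ylRowBlock μ a ++ ylRows μ 0 a))[p]'hp' = (a, b) :=
    (List.getElem_of_eq hsplit hp).symm.trans hq
  clear hq
  have hq := hq'
  have hp := hp'
  have hnotlt : ¬ p < (ylRows μ (a + 1) (μ.colLen 0 - (a + 1))).length := by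
    intro hlt
    have h1 := List.getElem_append_left (bs := ylRowBlock μ a ++ ylRows μ 0 a) hlt (h' := hp)
    have h2 := List.getElem_mem hlt
    obtain ⟨hge, -, -⟩ := fst_of_mem_ylRows h2
    rw [← h1, hq] at hge
    simp at hge
  push_neg at hnotlt
  have hplen : p - (ylRows μ (a + 1) (μ.colLen 0 - (a + 1))).length <
      (ylRowBlock μ a ++ ylRows μ 0 a).length := by
    rw [List.length_append] at hp
    omega
  have h1 := List.getElem_append_right (bs := ylRowBlock μ a ++ ylRows μ 0 a) hnotlt (h₂ := hp)
  have hlt2 : p - (ylRows μ (a + 1) (μ.colLen 0 - (a + 1))).length < (ylRowBlock μ a).length := by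
    by_contra hge2
    push_neg at hge2
    have h2 := List.getElem_append_right (bs := ylRows μ 0 a) hge2 (h₂ := hplen)
    have h3 := List.getElem_mem (l := ylRows μ 0 a)
      (n := p - (ylRows μ (a + 1) (μ.colLen 0 - (a + 1))).length - (ylRowBlock μ a).length)
      (by rw [List.length_append] at hplen; omega)
    obtain ⟨-, hlt3, -⟩ := fst_of_mem_ylRows h3
    rw [← h2, ← h1, hq] at hlt3
    omega
  have h2 := List.getElem_append_left (bs := ylRows μ 0 a) hlt2 (h' := hplen)
  have h3 := getElem_ylRowBlock μ a _ hlt2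
  rw [h2, h3, hq] at h1
  have hb2 : b = p - (ylRows μ (a + 1) (μ.colLen 0 - (a + 1))).length :=
    (Prod.ext_iff.1 h1).2
  omega

set_option maxHeartbeats 2000000 in
/-- For `1 ≤ i < n`, the lowering operator `f_i` maps
`SSYT_n(λ)` into `SSYT_n(λ) ∪ {0}`: if `f_i(T) ≠ 0` then `f_i(T)` is again a
semistandard Young tableau of shape `λ` with entries in `{1, …, n}`, and its
weight is obtained from `wt(T)` by decreasing the `i`-th part by `1` and
increasing the `(i+1)`-st part by `1`. -/
theorem young_lower_maps_to (μ : YoungDiagram) (n : ℕ) (i : ℕ)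
    (h1 : 1 ≤ i) (h2 : i < n) (T : SemistandardYoungTableau μ)
    (hpos : ∀ rc ∈ μ.cells, 1 ≤ T rc.1 rc.2)
    (hle : ∀ rc ∈ μ.cells, T rc.1 rc.2 ≤ n)
    (g : ℕ → ℕ → ℕ) (hg : youngLowerFun i T = some g) :
    (∃ S : SemistandardYoungTableau μ,
      (∀ a b, S a b = g a b) ∧
      (∀ rc ∈ μ.cells, 1 ≤ S rc.1 rc.2 ∧ S rc.1 rc.2 ≤ n)) ∧
    wtM μ g i + 1 = wtM μ (fun a b => T a b) i ∧
    wtM μ g (i + 1) = wtM μ (fun a b => T a b) (i + 1) + 1 ∧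
    (∀ k, k ≠ i → k ≠ i + 1 → wtM μ g k = wtM μ (fun a b => T a b) k) := by
  classical
  -- `f_i(T) ≠ 0`, so `m_i(w(T)) > 0`
  by_cases hM0 : mMax i (rowWord T) ≤ 0
  · rw [youngLowerFun, if_pos hM0] at hg
    cases hg
  push_neg at hM0
  obtain ⟨hpN, hpM, hpmin⟩ := lowerIdx_spec i T hM0
  set w := rowWord T with hwdef
  set M := mMax i w with hMdef
  set p := lowerIdx i T with hpdef
  have hlenw : w.length = (readingCells μ).length := by
    rw [hwdef, rowWord, List.length_map]
  have hpcells : p < (readingCells μ).length := by omega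
  -- the cell `q = (a, b)` at position `p`
  obtain ⟨⟨a, b⟩, hqel⟩ : ∃ q, (readingCells μ)[p]'hpcells = q := ⟨_, rfl⟩
  obtain ⟨haK, hbrow, hsplit, hpformula⟩ := idx_decomp μ p hpcells hqel
  have hmemab : (a, b) ∈ μ := YoungDiagram.mem_iff_lt_rowLen.2 hbrow
  -- identify `g`
  have hg' : g = fun a' b' => if (a', b') = (a, b) then i + 1 else T a' b' := by
    rw [youngLowerFun, if_neg (not_le.2 hM0)] at hg
    rw [List.getElem?_eq_getElem hpcells, hqel] at hg
    exact (Option.some.inj hg).symm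
  -- the strict bound below the maximum before position `p`
  have hlt : ∀ r ≤ p, mAt i w r < M := by
    intro r hr
    cases r with
    | zero => rw [mAt_zero]; exact hM0
    | succ s =>
      exact lt_of_le_of_ne (le_mMax (le_of_lt hM0)) (hpmin s (by omega))
  -- the letter at position `p` is `i`, i.e. `T a b = i`
  have hwp : w[p]'hpN = T a b := by
    have h0' : p < (List.map (fun rc : ℕ × ℕ => T rc.1 rc.2) (readingCells μ)).length := by
      rw [List.length_map]; exact hpcells
    have hh : w[p]'hpN = (List.map (fun rc : ℕ × ℕ => T rc.1 rc.2) (readingCells μ))[p]'h0' :=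
      rfl
    rw [hh, List.getElem_map, hqel]
  have hTab : T a b = i := by
    by_contra hne
    have hstep := mAt_succ_eq (i := i) hpN
    rw [hpM, hwp, if_neg hne] at hstep
    have h1 := hlt p le_rfl
    split_ifs at hstep <;> omega
  -- the word splits along the rows
  set K := μ.colLen 0 with hKdef
  set e : ℕ × ℕ → ℕ := fun rc => T rc.1 rc.2 with hedef
  set Bm := ylRows μ (a + 1) (K - (a + 1)) with hBmdef
  set t := Bm.length with htdef
  have hmapgen : ∀ r, (ylRowBlock μ r).map e = (List.range (μ.rowLen r)).map (fun j => T r j) := by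
    intro r
    rw [ylRowBlock, List.map_map]
    rfl
  have hMidmap : (ylRowBlock μ a).map e = (List.range (μ.rowLen a)).map (fun j => T a j) :=
    hmapgen a
  have hwsplit : w = Bm.map e ++ ((List.range (μ.rowLen a)).map (fun j => T a j)
      ++ (ylRows μ 0 a).map e) := by
    rw [hwdef, rowWord, hsplit, List.map_append, List.map_append, hMidmap]
  have htmap : (Bm.map e).length = t := by rw [List.length_map, htdef]
  clear_value w M p K e Bm t
  have hM0' : 0 < mMax i w := by rw [← hMdef]; exact hM0
  -- Claim R : the entry right of the modified cell is not `i`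
  have hR : ∀ _ : b + 1 < μ.rowLen a, T a (b + 1) ≠ i := by
    intro hb1 hTi
    have hlen2 : p + 1 < w.length := by
      rw [hwsplit]
      simp only [List.length_append, List.length_map, List.length_range]
      omega
    have hget : w[p + 1]'hlen2 = T a (b + 1) := by
      rw [List.getElem_of_eq hwsplit hlen2]
      rw [List.getElem_append_right (by rw [htmap]; omega)]
      rw [List.getElem_append_left (by simp only [List.length_map, List.length_range]; omega :
        p + 1 - (Bm.map e).length < ((List.range (μ.rowLen a)).map (fun j => T a j)).length)]
      have hidx : p + 1 - (List.map e Bm).length = b + 1 := by rw [htmap]; omega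
      rw [List.getElem_map, List.getElem_range, hidx]
    have hstep := mAt_succ_eq (i := i) hlen2
    rw [hget, hTi, if_pos rfl, if_neg (by omega)] at hstep
    rw [hpM] at hstep
    have := le_mMax (i := i) (w := w) (r := p + 1 + 1) (le_of_lt hM0')
    omega
  -- Claim C : the entry below the modified cell is not `i + 1`
  have hC : ∀ _ : (a + 1, b) ∈ μ, T (a + 1) b ≠ i + 1 := by
    intro hmem1 hT1
    set ℓ1 := μ.rowLen (a + 1) with hl1def
    have hbl1 : b < ℓ1 := YoungDiagram.mem_iff_lt_rowLen.1 hmem1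
    have ha1K : a + 1 < K := by
      rw [hKdef]
      exact YoungDiagram.mem_iff_lt_colLen.1 (μ.up_left_mem le_rfl (Nat.zero_le b) hmem1)
    have hBsplit : Bm = ylRows μ (a + 2) (K - (a + 2)) ++ ylRowBlock μ (a + 1) := by
      rw [hBmdef, ylRows_snoc μ (a + 1) (K - (a + 1)) (by omega)]
      rfl
    set A := (ylRows μ (a + 2) (K - (a + 2))).map e with hAdef
    set u := A.length with hudef
    have hR1map : (ylRowBlock μ (a + 1)).map e
        = (List.range ℓ1).map (fun j => T (a + 1) j) := by
      rw [hmapgen (a + 1), hl1def]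
    have hw2 : w = A ++ ((List.range ℓ1).map (fun j => T (a + 1) j)
        ++ ((List.range (μ.rowLen a)).map (fun j => T a j) ++ (ylRows μ 0 a).map e)) := by
      rw [hwsplit, hBsplit, List.map_append, hR1map, List.append_assoc]
    have htu : t = u + ℓ1 := by
      have e1 : Bm.length = (ylRows μ (a + 2) (K - (a + 2))).length + μ.rowLen (a + 1) := by
        rw [hBsplit, List.length_append, length_ylRowBlock]
      have e2 : A.length = (ylRows μ (a + 2) (K - (a + 2))).length := List.length_map _
      have e3 := htdef
      have e4 := hl1def
      have e5 := hudef
      omega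
    clear_value ℓ1 A u
    -- the first column `c0` of the run of `i`'s in row `a`
    have hex0 : ∃ c, T a c = i := ⟨b, hTab⟩
    set c0 := Nat.find hex0 with hc0def
    have hc0 : T a c0 = i := Nat.find_spec hex0
    have hc0b : c0 ≤ b := Nat.find_min' hex0 hTab
    have hc0min : ∀ c < c0, T a c ≠ i := fun c hc => Nat.find_min hex0 hc
    clear_value c0
    -- entries of row `a + 1` over the run are all `i + 1`
    have hmemc : ∀ c ≤ b, (a + 1, c) ∈ μ := fun c hc =>
      μ.up_left_mem le_rfl hc hmem1
    have h1eq : ∀ c, c0 ≤ c → c ≤ b → T (a + 1) c = i + 1 := by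
      intro c h1 h2
      have hub : T (a + 1) c ≤ i + 1 := by
        have := T.row_weak_of_le h2 hmem1
        omega
      have hlb : i < T (a + 1) c := by
        have h3 := T.col_strict ((by omega : a < a + 1)) (hmemc c h2)
        have h5 : T a c0 ≤ T a c :=
          T.row_weak_of_le h1 (μ.up_left_mem (by omega : a ≤ a + 1) le_rfl (hmemc c h2))
        omega
      omega
    have hA1c0 : T (a + 1) c0 = i + 1 := h1eq c0 le_rfl hc0b
    have h1i : ∀ c, c0 ≤ c → c < ℓ1 → T (a + 1) c ≠ i := by
      intro c h1 h2
      rw [hl1def] at h2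
      have := T.row_weak_of_le h1 (YoungDiagram.mem_iff_lt_rowLen.2 h2)
      omega
    have hai1 : ∀ c ≤ b, T a c ≠ i + 1 := by
      intro c hc
      have := T.row_weak_of_le hc hmemab
      omega
    -- decompose the two prefixes of the word
    have htake1 : w.take (p + 1) = A ++ ((List.range ℓ1).map (fun j => T (a + 1) j)
        ++ (List.range (b + 1)).map (fun j => T a j)) := by
      have hp1 : p + 1 = A.length + (ℓ1 + (b + 1)) := by
        have e5 := hudef
        rw [hpformula]
        omega
      rw [hw2, hp1, List.take_length_add_append]
      congr 1
      have h4 : ℓ1 + (b + 1) = ((List.range ℓ1).map (fun j => T (a + 1) j)).length + (b + 1) := by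
        simp
      rw [h4, List.take_length_add_append]
      congr 1
      rw [List.take_append]
      have h5 : b + 1 - ((List.range (μ.rowLen a)).map (fun j => T a j)).length = 0 := by
        simp only [List.length_map, List.length_range]
        omega
      rw [h5, List.take_zero, List.append_nil]
      rw [← List.map_take, List.take_range]
      congr 2
      omega
    have htake2 : w.take (u + c0) = A ++ (List.range c0).map (fun j => T (a + 1) j) := by
      rw [hw2]
      have := List.take_length_add_append (l₁ := A)
        (l₂ := (List.range ℓ1).map (fun j => T (a + 1) j)
          ++ ((List.range (μ.rowLen a)).map (fun j => T a j) ++ (ylRows μ 0 a).map e)) c0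
      rw [hudef, this]
      congr 1
      rw [List.take_append]
      have h5 : c0 - ((List.range ℓ1).map (fun j => T (a + 1) j)).length = 0 := by
        simp only [List.length_map, List.length_range]
        omega
      rw [h5, List.take_zero, List.append_nil]
      rw [← List.map_take, List.take_range]
      congr 2
      omega
    -- split the row `a+1` word at `c0` and at `b+1`
    have hrsplit : List.range ℓ1 = List.range c0 ++ List.range' c0 (ℓ1 - c0) := by
      have h := List.range'_append (s := 0) (m := c0) (n := ℓ1 - c0) (step := 1)
      rw [show 0 + 1 * c0 = c0 by omega, show c0 + (ℓ1 - c0) = ℓ1 by omega] at h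
      rw [List.range_eq_range', List.range_eq_range', ← h]
    have hrsplit2 : List.range' c0 (ℓ1 - c0)
        = List.range' c0 (b + 1 - c0) ++ List.range' (b + 1) (ℓ1 - (b + 1)) := by
      have h := List.range'_append (s := c0) (m := b + 1 - c0) (n := ℓ1 - (b + 1)) (step := 1)
      rw [show c0 + 1 * (b + 1 - c0) = b + 1 by omega,
        show b + 1 - c0 + (ℓ1 - (b + 1)) = ℓ1 - c0 by omega] at h
      exact h.symm
    have hrsplit3 : List.range (b + 1) = List.range c0 ++ List.range' c0 (b + 1 - c0) := by
      have h := List.range'_append (s := 0) (m := c0) (n := b + 1 - c0) (step := 1)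
      rw [show 0 + 1 * c0 = c0 by omega, show c0 + (b + 1 - c0) = b + 1 by omega] at h
      rw [List.range_eq_range', List.range_eq_range', ← h]
    -- count estimates
    have cnt1 : ((List.range' c0 (ℓ1 - c0)).map (fun j => T (a + 1) j)).count i = 0 := by
      rw [List.count_eq_zero]
      intro hmem'
      obtain ⟨c, hc, hci⟩ := List.mem_map.1 hmem'
      rw [List.mem_range'_1] at hc
      exact h1i c hc.1 (by omega) hci
    have cnt2 : ((List.range' c0 (b + 1 - c0)).map (fun j => T (a + 1) j)).count (i + 1)
        = b + 1 - c0 := by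
      have hall : ∀ x ∈ (List.range' c0 (b + 1 - c0)).map (fun j => T (a + 1) j),
          i + 1 = x := by
        intro x hx
        obtain ⟨c, hc, rfl⟩ := List.mem_map.1 hx
        rw [List.mem_range'_1] at hc
        exact (h1eq c hc.1 (by omega)).symm
      rw [List.count_eq_length.2 hall, List.length_map, List.length_range']
    have cnt3 : (((List.range (b + 1)).map (fun j => T a j)).count i) ≤ b + 1 - c0 := by
      rw [hrsplit3, List.map_append, List.count_append]
      have hz : ((List.range c0).map (fun j => T a j)).count i = 0 := by
        rw [List.count_eq_zero]
        intro hmem'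
        obtain ⟨c, hc, hci⟩ := List.mem_map.1 hmem'
        exact hc0min c (List.mem_range.1 hc) hci
      rw [hz]
      have := List.count_le_length (a := i) (l := (List.range' c0 (b + 1 - c0)).map (fun j => T a j))
      simp only [List.length_map, List.length_range'] at this
      omega
    have cnt4 : (((List.range (b + 1)).map (fun j => T a j)).count (i + 1)) = 0 := by
      rw [List.count_eq_zero]
      intro hmem'
      obtain ⟨c, hc, hci⟩ := List.mem_map.1 hmem'
      exact hai1 c (by have := List.mem_range.1 hc; omega) hci
    have cnt5 : b + 1 - c0 ≤ ((List.range' c0 (ℓ1 - c0)).map (fun j => T (a + 1) j)).count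
        (i + 1) := by
      rw [hrsplit2, List.map_append, List.count_append, cnt2]
      omega
    -- compare `m_i` at the two prefixes
    have hcompare : mAt i w (p + 1) ≤ mAt i w (u + c0) := by
      unfold mAt
      rw [htake1, htake2]
      rw [hrsplit, List.map_append]
      simp only [List.count_append]
      push_cast
      have c4' := cnt4
      have c3' := cnt3
      have c1' := cnt1
      have c5' := cnt5
      omega
    have huc0p : u + c0 ≤ p := by
      rw [hpformula]
      omega
    have h6 := hlt (u + c0) huc0p
    rw [hpM] at hcompare
    omega
  -- entries at and around the modified cell
  have hTb1 : ∀ _ : (a, b + 1) ∈ μ, i + 1 ≤ T a (b + 1) := by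
    intro hmem'
    have h1 : T a b ≤ T a (b + 1) := T.row_weak ((by omega : b < b + 1)) hmem'
    have h2 := hR (YoungDiagram.mem_iff_lt_rowLen.1 hmem')
    omega
  have hTa1 : ∀ _ : (a + 1, b) ∈ μ, i + 2 ≤ T (a + 1) b := by
    intro hmem'
    have h1 : T a b < T (a + 1) b := T.col_strict ((by omega : a < a + 1)) hmem'
    have h2 := hC hmem'
    omega
  -- the new tableau
  have hrow : ∀ {a' b1 b2 : ℕ}, b1 < b2 → (a', b2) ∈ μ →
      (if (a', b1) = (a, b) then i + 1 else T a' b1)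
        ≤ (if (a', b2) = (a, b) then i + 1 else T a' b2) := by
    intro a' b1 b2 hb12 hmem2
    split_ifs with h1 h2 h2
    · have e1 := (Prod.ext_iff.1 h1).2
      have e2 := (Prod.ext_iff.1 h2).2
      simp only at e1 e2
      omega
    · have ha' : a' = a := by simpa using (Prod.ext_iff.1 h1).1
      have hb1' : b1 = b := by simpa using (Prod.ext_iff.1 h1).2
      have hmem2' : (a, b2) ∈ μ := by rwa [ha'] at hmem2
      have hb2 : (a, b + 1) ∈ μ := μ.up_left_mem le_rfl (by omega) hmem2'
      have h3 := hTb1 hb2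
      have h4 : T a (b + 1) ≤ T a b2 := T.row_weak_of_le (by omega) hmem2'
      rw [ha']
      omega
    · have ha' : a' = a := by simpa using (Prod.ext_iff.1 h2).1
      have hb2' : b2 = b := by simpa using (Prod.ext_iff.1 h2).2
      have h3 : T a' b1 ≤ T a' b2 := T.row_weak hb12 hmem2
      have h4 : T a' b2 = i := by rw [ha', hb2', hTab]
      omega
    · exact T.row_weak hb12 hmem2
  have hcol : ∀ {a1 a2 b' : ℕ}, a1 < a2 → (a2, b') ∈ μ →
      (if (a1, b') = (a, b) then i + 1 else T a1 b')
        < (if (a2, b') = (a, b) then i + 1 else T a2 b') := by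
    intro a1 a2 b' h12 hmem2
    split_ifs with h1 h2 h2
    · have e1 := (Prod.ext_iff.1 h1).1
      have e2 := (Prod.ext_iff.1 h2).1
      simp only at e1 e2
      omega
    · have ha' : a1 = a := by simpa using (Prod.ext_iff.1 h1).1
      have hb' : b' = b := by simpa using (Prod.ext_iff.1 h1).2
      have hmem2' : (a2, b) ∈ μ := by rwa [hb'] at hmem2
      have hb2 : (a + 1, b) ∈ μ := μ.up_left_mem (by omega) le_rfl hmem2'
      have h3 := hTa1 hb2
      have h4 : T (a + 1) b ≤ T a2 b := by
        rcases Nat.lt_or_ge (a + 1) a2 with h | h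
        · exact le_of_lt (T.col_strict h hmem2')
        · have he : a + 1 = a2 := by omega
          rw [he]
      rw [hb']
      omega
    · have ha' : a2 = a := by simpa using (Prod.ext_iff.1 h2).1
      have hb' : b' = b := by simpa using (Prod.ext_iff.1 h2).2
      have h3 : T a1 b' < T a2 b' := T.col_strict h12 hmem2
      have h4 : T a2 b' = i := by rw [ha', hb', hTab]
      omega
    · exact T.col_strict h12 hmem2
  have hzero : ∀ {a' b' : ℕ}, (a', b') ∉ μ →
      (if (a', b') = (a, b) then i + 1 else T a' b') = 0 := by
    intro a' b' hnm
    split_ifs with h1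
    · obtain ⟨rfl, rfl⟩ := Prod.ext_iff.1 h1
      exact absurd hmemab hnm
    · exact T.zeros hnm
  set S : SemistandardYoungTableau μ :=
    ⟨fun a' b' => if (a', b') = (a, b) then i + 1 else T a' b', hrow, hcol, hzero⟩ with hSdef
  have hqcells : (a, b) ∈ μ.cells := (YoungDiagram.mem_cells _).2 hmemab
  have hfilter_eq : ∀ k, (Finset.filter (fun rc => g rc.1 rc.2 = k) (μ.cells.erase (a, b)))
      = Finset.filter (fun rc => T rc.1 rc.2 = k) (μ.cells.erase (a, b)) := by
    intro k
    apply Finset.filter_congr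
    intro x hx
    have hxne : x ≠ (a, b) := (Finset.mem_erase.1 hx).1
    rw [hg']
    simp only
    rw [if_neg (by rwa [Prod.mk.eta])]
  have hgab : g a b = i + 1 := by rw [hg']; simp
  have hgoff : ∀ rc : ℕ × ℕ, rc ≠ (a, b) → g rc.1 rc.2 = T rc.1 rc.2 := by
    intro rc hne
    rw [hg']
    simp only
    rw [if_neg (by rwa [Prod.mk.eta])]
  refine ⟨⟨S, ?_, ?_⟩, ?_, ?_, ?_⟩
  · intro a' b'
    rw [hg']
    rfl
  · intro rc hrc
    have hcoe : S rc.1 rc.2 = if (rc.1, rc.2) = (a, b) then i + 1 else T rc.1 rc.2 := rfl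
    rw [hcoe]
    split_ifs with h1
    · omega
    · exact ⟨hpos rc hrc, hle rc hrc⟩
  · rw [wtM_decomp μ g i hqcells, wtM_decomp μ (fun a b => T a b) i hqcells, hfilter_eq]
    simp only [hgab, hTab]
    split_ifs <;> omega
  · rw [wtM_decomp μ g (i + 1) hqcells, wtM_decomp μ (fun a b => T a b) (i + 1) hqcells,
      hfilter_eq]
    simp only [hgab, hTab]
    split_ifs <;> omega
  · intro k hk1 hk2
    rw [wtM_decomp μ g k hqcells, wtM_decomp μ (fun a b => T a b) k hqcells, hfilter_eq]
    simp only [hgab, hTab]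
    split_ifs <;> omega
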